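/- Given the positive-vacuum phase convention ⟨0| U^mat_z |0⟩ > 0 for all spin configurations z, the unitaries U^mat_z satisfy the cocycle-type locality identity (U^mat_z)† U^mat_{z+i} = (U^mat_{z+j})† U^mat_{z+i+j} for any two spins i, j separated by distance greater than O(R), given that both sides implement the same QCA (are equal up to a phase) and that ⟨Ψ(M(z))|Ψ(M(z'))⟩ > 0 for all pairs of domain-wall manifolds. -/
import Mathlib


/-!
STATEMENT 14: given the positive-vacuum phase convention `⟨0| U^mat_z |0⟩ > 0` for all
spin configurations `z`, the disentangling unitaries satisfy the cocycle-type locality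
identity `(U^mat_z)† U^mat_{z+i} = (U^mat_{z+j})† U^mat_{z+i+j}` for spins `i, j` at
distance greater than `C = O(R)`, given that both sides implement the same QCA (hence are
equal up to a phase) and that overlaps of the Walker–Wang ground states
`⟨Ψ(M(z))|Ψ(M(z'))⟩ = ⟨0| U^mat_z (U^mat_{z'})† |0⟩` are positive for all pairs.
-/

noncomputable section

open Matrix

/-- the spin configuration `z + i`: flip spin `i` in `z` -/
def flipAt {S : Type*} [DecidableEq S] (z : S → Bool) (i : S) : S → Bool :=
  Function.update z i (!(z i))

theorem stmt_14 {S M : Type*} [DecidableEq S] [Fintype M] [DecidableEq M]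
    (d : S → S → ℝ) (C : ℝ)
    (Umat : (S → Bool) → Matrix M M ℂ) (vac : M)
    (hunit : ∀ z, Umat z ∈ unitary (Matrix M M ℂ))
    -- the positive-vacuum rule ⟨0| U^mat_z |0⟩ > 0
    (hpos : ∀ z, (Umat z vac vac).im = 0 ∧ 0 < (Umat z vac vac).re)
    -- both sides implement the same QCA, hence agree up to a phase
    (hphase : ∀ (z : S → Bool) (i j : S), C < d i j → ∃ c : ℂ, ‖c‖ = 1 ∧
      star (Umat z) * Umat (flipAt z i) =
        c • (star (Umat (flipAt z j)) * Umat (flipAt (flipAt z i) j)))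
    -- positivity of overlaps of Walker–Wang ground states, ⟨Ψ(M(z))|Ψ(M(z'))⟩ > 0
    (hoverlap : ∀ z z' : S → Bool,
      ((Umat z * star (Umat z')) vac vac).im = 0 ∧
        0 < ((Umat z * star (Umat z')) vac vac).re) :
    ∀ (z : S → Bool) (i j : S), C < d i j →
      star (Umat z) * Umat (flipAt z i) =
        star (Umat (flipAt z j)) * Umat (flipAt (flipAt z i) j) := by
  intro z i j hd
  obtain ⟨c, hc, heq⟩ := hphase z i j hd
  set U1 := Umat z
  set U2 := Umat (flipAt z i)
  set U3 := Umat (flipAt z j)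
  set U4 := Umat (flipAt (flipAt z i) j)
  have h1 : U1 * star U1 = 1 := (Unitary.mem_iff.mp (hunit z)).2
  have h4 : U4 * star U4 = 1 := (Unitary.mem_iff.mp (hunit (flipAt (flipAt z i) j))).2
  -- multiply heq on the left by U1 and on the right by star U4
  have key : U2 * star U4 = c • (U1 * star U3) := by
    have := congrArg (fun X => U1 * X * star U4) heq
    simp only [Matrix.mul_smul, Matrix.smul_mul] at this
    calc U2 * star U4 = U1 * (star U1 * U2) * star U4 := by
          rw [← mul_assoc, h1, one_mul]
      _ = c • (U1 * (star U3 * U4) * star U4) := this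
      _ = c • (U1 * star U3 * (U4 * star U4)) := by
          congr 1; simp only [mul_assoc]
      _ = c • (U1 * star U3) := by rw [h4, mul_one]
  have ha := hoverlap (flipAt z i) (flipAt (flipAt z i) j)
  have hb := hoverlap z (flipAt z j)
  set a : ℂ := (U2 * star U4) vac vac with ha_def
  set b : ℂ := (U1 * star U3) vac vac with hb_def
  have hab : a = c * b := by
    have := congrFun (congrFun key vac) vac
    simpa [Matrix.smul_apply, smul_eq_mul] using this
  have hareal : a = (a.re : ℂ) := by
    apply Complex.ext <;> simp [ha.1]
  have hbreal : b = (b.re : ℂ) := by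
    apply Complex.ext <;> simp [hb.1]
  have hbne : b ≠ 0 := by
    intro h
    rw [h] at hb
    simp at hb
  have hcval : c = ((a.re / b.re : ℝ) : ℂ) := by
    rw [Complex.ofReal_div, ← hareal, ← hbreal, hab, mul_div_assoc, div_self hbne, mul_one]
  have hnorm : ‖c‖ = a.re / b.re := by
    rw [hcval, Complex.norm_real, Real.norm_eq_abs, abs_of_pos (div_pos ha.2 hb.2)]
  have hdiv : a.re / b.re = 1 := by rw [← hnorm, hc]
  have hc1 : c = 1 := by rw [hcval, hdiv]; norm_num
  rw [heq, hc1, one_smul]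

end
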